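/- The computation offloading game possesses a pure Nash equilibrium: there exists a strategy profile α* such that for every user k and every alternative action a : Fin (M+1), c k α* ≤ c k (α* with its k-th coordinate replaced by a). -/

import Mathlib

-- analytic core lemmas
private lemma arg_pos {wk σ2 x : ℝ} (hw : 0 < wk) (hσ : 0 < σ2) (hx : 0 ≤ x) :
    1 < 1 + wk / (x + σ2) := by
  have hxσ : 0 < x + σ2 := by linarith
  have := div_pos hw hxσ
  linarith

private lemma FltF {B σ2 wk C Mr : ℝ} (hB : 0 < B) (hσ : 0 < σ2) (hM : 0 < Mr)
    (hw : 0 < wk) (hC : 0 < C) {x y : ℝ} (hx : 0 ≤ x) (hy : 0 ≤ y) :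
    C / ((B / Mr) * Real.logb 2 (1 + wk / (x + σ2))) <
      C / ((B / Mr) * Real.logb 2 (1 + wk / (y + σ2))) ↔ x < y := by
  have hxσ : 0 < x + σ2 := by linarith
  have hyσ : 0 < y + σ2 := by linarith
  have hBM : 0 < B / Mr := div_pos hB hM
  have hLx : 0 < Real.logb 2 (1 + wk / (x + σ2)) :=
    Real.logb_pos one_lt_two (arg_pos hw hσ hx)
  have hLy : 0 < Real.logb 2 (1 + wk / (y + σ2)) :=
    Real.logb_pos one_lt_two (arg_pos hw hσ hy)
  rw [div_lt_div_iff_of_pos_left hC (mul_pos hBM hLx) (mul_pos hBM hLy),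
    mul_lt_mul_iff_right₀ hBM,
    Real.logb_lt_logb_iff one_lt_two (lt_trans one_pos (arg_pos hw hσ hy))
      (lt_trans one_pos (arg_pos hw hσ hx))]
  constructor
  · intro hlt
    have h2 : wk / (y + σ2) < wk / (x + σ2) := by linarith
    have := (div_lt_div_iff_of_pos_left hw hyσ hxσ).mp h2
    linarith
  · intro hlt
    have : wk / (y + σ2) < wk / (x + σ2) := (div_lt_div_iff_of_pos_left hw hyσ hxσ).mpr (by linarith)
    linarith

private lemma FltEL {B σ2 wk C EL Mr : ℝ} (hB : 0 < B) (hσ : 0 < σ2) (hM : 0 < Mr)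
    (hw : 0 < wk) (hC : 0 < C) (hEL : 0 < EL) {x : ℝ} (hx : 0 ≤ x) :
    C / ((B / Mr) * Real.logb 2 (1 + wk / (x + σ2))) < EL ↔
      x < wk / ((2 : ℝ) ^ (C * Mr / (EL * B)) - 1) - σ2 := by
  have hxσ : 0 < x + σ2 := by linarith
  have hBM : 0 < B / Mr := div_pos hB hM
  have hLx : 0 < Real.logb 2 (1 + wk / (x + σ2)) :=
    Real.logb_pos one_lt_two (arg_pos hw hσ hx)
  have he : 0 < C * Mr / (EL * B) := div_pos (mul_pos hC hM) (mul_pos hEL hB)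
  have h2e : 1 < (2 : ℝ) ^ (C * Mr / (EL * B)) :=
    (Real.one_lt_rpow_iff_of_pos two_pos).mpr (Or.inl ⟨one_lt_two, he⟩)
  rw [div_lt_iff₀ (mul_pos hBM hLx)]
  constructor
  · intro hlt
    have h1 : C * Mr / (EL * B) < Real.logb 2 (1 + wk / (x + σ2)) := by
      rw [div_lt_iff₀ (mul_pos hEL hB)]
      calc C * Mr < EL * ((B / Mr) * Real.logb 2 (1 + wk / (x + σ2))) * Mr := by
            exact mul_lt_mul_of_pos_right hlt hM
        _ = Real.logb 2 (1 + wk / (x + σ2)) * (EL * B) := by field_simp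
    have h2 : (2 : ℝ) ^ (C * Mr / (EL * B)) < 1 + wk / (x + σ2) :=
      (Real.lt_logb_iff_rpow_lt one_lt_two (by positivity)).mp h1
    have h3 : ((2 : ℝ) ^ (C * Mr / (EL * B)) - 1) * (x + σ2) < wk := by
      have := (lt_div_iff₀ hxσ).mp (by linarith : (2 : ℝ) ^ (C * Mr / (EL * B)) - 1 < wk / (x + σ2))
      linarith
    have h4 : x + σ2 < wk / ((2 : ℝ) ^ (C * Mr / (EL * B)) - 1) :=
      (lt_div_iff₀ (by linarith)).mpr (by linarith [h3])
    linarith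
  · intro hlt
    have h4 : x + σ2 < wk / ((2 : ℝ) ^ (C * Mr / (EL * B)) - 1) := by linarith
    have h3 : ((2 : ℝ) ^ (C * Mr / (EL * B)) - 1) * (x + σ2) < wk := by
      have := (lt_div_iff₀ (by linarith : (0:ℝ) < (2 : ℝ) ^ (C * Mr / (EL * B)) - 1)).mp h4
      linarith
    have h2 : (2 : ℝ) ^ (C * Mr / (EL * B)) < 1 + wk / (x + σ2) := by
      have := (lt_div_iff₀ hxσ).mpr h3
      linarith
    have h1 : C * Mr / (EL * B) < Real.logb 2 (1 + wk / (x + σ2)) :=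
      (Real.lt_logb_iff_rpow_lt one_lt_two (by positivity)).mpr h2
    have h0 : C * Mr < Real.logb 2 (1 + wk / (x + σ2)) * (EL * B) :=
      (div_lt_iff₀ (mul_pos hEL hB)).mp h1
    have hM' : (0:ℝ) < Mr⁻¹ := by positivity
    calc C = (C * Mr) * Mr⁻¹ := by field_simp
      _ < (Real.logb 2 (1 + wk / (x + σ2)) * (EL * B)) * Mr⁻¹ :=
          mul_lt_mul_of_pos_right h0 hM'
      _ = EL * ((B / Mr) * Real.logb 2 (1 + wk / (x + σ2))) := by field_simp

private lemma ELltF {B σ2 wk C EL Mr : ℝ} (hB : 0 < B) (hσ : 0 < σ2) (hM : 0 < Mr)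
    (hw : 0 < wk) (hC : 0 < C) (hEL : 0 < EL) {x : ℝ} (hx : 0 ≤ x) :
    EL < C / ((B / Mr) * Real.logb 2 (1 + wk / (x + σ2))) ↔
      wk / ((2 : ℝ) ^ (C * Mr / (EL * B)) - 1) - σ2 < x := by
  have h1 := FltEL hB hσ hM hw hC hEL hx (B := B)
  have hBM : 0 < B / Mr := div_pos hB hM
  have hLx : 0 < Real.logb 2 (1 + wk / (x + σ2)) :=
    Real.logb_pos one_lt_two (arg_pos hw hσ hx)
  constructor
  · intro hlt
    by_contra hcon
    push_neg at hcon
    rcases lt_or_eq_of_le hcon with h | h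
    · have := h1.mpr h; linarith
    · -- x = V : show F x = EL
      have he : 0 < C * Mr / (EL * B) := div_pos (mul_pos hC hM) (mul_pos hEL hB)
      have h2e : 1 < (2 : ℝ) ^ (C * Mr / (EL * B)) :=
        (Real.one_lt_rpow_iff_of_pos two_pos).mpr (Or.inl ⟨one_lt_two, he⟩)
      have hxσ : 0 < x + σ2 := by linarith
      have harg : 1 + wk / (x + σ2) = (2 : ℝ) ^ (C * Mr / (EL * B)) := by
        have hxv : x + σ2 = wk / ((2 : ℝ) ^ (C * Mr / (EL * B)) - 1) := by linarith [h]
        rw [hxv]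
        field_simp
        ring
      have hL : Real.logb 2 (1 + wk / (x + σ2)) = C * Mr / (EL * B) := by
        rw [harg, Real.logb_rpow two_pos (by norm_num : (2:ℝ) ≠ 1)]
      rw [hL] at hlt
      have : C / ((B / Mr) * (C * Mr / (EL * B))) = EL := by
        field_simp
      rw [this] at hlt
      exact lt_irrefl _ hlt
  · intro hlt
    have hnot : ¬ (C / ((B / Mr) * Real.logb 2 (1 + wk / (x + σ2))) < EL) := by
      intro hcon; have := h1.mp hcon; linarith
    rcases lt_or_eq_of_le (not_lt.mp hnot) with h | h
    · exact h
    · exfalso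
      -- F x = EL forces x = V
      have he : 0 < C * Mr / (EL * B) := div_pos (mul_pos hC hM) (mul_pos hEL hB)
      have h2e : 1 < (2 : ℝ) ^ (C * Mr / (EL * B)) :=
        (Real.one_lt_rpow_iff_of_pos two_pos).mpr (Or.inl ⟨one_lt_two, he⟩)
      have hxσ : 0 < x + σ2 := by linarith
      have h' : EL * ((B / Mr) * Real.logb 2 (1 + wk / (x + σ2))) = C :=
        (eq_div_iff (ne_of_gt (mul_pos hBM hLx))).mp h
      have hL : Real.logb 2 (1 + wk / (x + σ2)) = C * Mr / (EL * B) := by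
        field_simp at h' ⊢
        linear_combination h'
      have harg : 1 + wk / (x + σ2) = (2 : ℝ) ^ (C * Mr / (EL * B)) := by
        have := Real.rpow_logb (by norm_num : (0:ℝ) < 2) (by norm_num : (2:ℝ) ≠ 1)
          (by positivity : 0 < 1 + wk / (x + σ2))
        rw [← this, hL]
      have hxv : x + σ2 = wk / ((2 : ℝ) ^ (C * Mr / (EL * B)) - 1) := by
        have h3 : wk / (x + σ2) = (2 : ℝ) ^ (C * Mr / (EL * B)) - 1 := by linarith
        rw [← h3]
        field_simp
      linarith

/-- The computation offloading game possesses a pure Nash equilibrium. -/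
theorem nash_equilibrium_exists
    (K M : ℕ) (B σ2 τ ζ : ℝ)
    (hB : 0 < B) (hσ : 0 < σ2) (hτ : 0 < τ) (hζ : 0 < ζ)
    (p h I D S : Fin K → ℝ)
    (hp : ∀ k, 0 < p k) (hh : ∀ k, 0 < h k) (hI : ∀ k, 0 < I k)
    (hD : ∀ k, 0 < D k) (hS : ∀ k, 0 < S k)
    (b : Fin K → ℝ) (hb : ∀ k, b k = 0 ∨ b k = 1)
    (w : Fin K → ℝ) (hw : ∀ k, w k = p k * h k)
    (Υ : Fin K → (Fin K → Fin (M + 1)) → ℝ)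
    (hΥ : ∀ k α, Υ k α =
      ∑ n ∈ (Finset.univ.erase k).filter (fun n => α n = α k), w n)
    (r : Fin K → (Fin K → Fin (M + 1)) → ℝ)
    (hr : ∀ k α, r k α = (B / (M : ℝ)) * Real.logb 2 (1 + w k / (Υ k α + σ2)))
    (EL : Fin K → ℝ) (hEL : ∀ k, EL k = ζ * S k ^ 3 / τ ^ 2)
    (EO : Fin K → (Fin K → Fin (M + 1)) → ℝ)
    (hEO : ∀ k α, EO k α = p k * (I k + (1 - b k) * D k) / r k α)
    (c : Fin K → (Fin K → Fin (M + 1)) → ℝ)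
    (hc : ∀ k α, c k α = if α k = 0 then EL k else EO k α)
    (V : Fin K → ℝ)
    (hV : ∀ k, V k = w k /
        ((2 : ℝ) ^ (p k * τ ^ 2 * (M : ℝ) * (I k + (1 - b k) * D k) / (B * ζ * S k ^ 3)) - 1)
      - σ2)
    (φ : (Fin K → Fin (M + 1)) → ℝ)
    (hφ : ∀ α, φ α =
      (1 / 2) * ∑ k : Fin K, ∑ n ∈ Finset.univ.erase k,
          w k * w n * (if α n = α k then (1 : ℝ) else 0) * (if 0 < α k then (1 : ℝ) else 0)
      + ∑ k : Fin K, w k * V k * (if α k = 0 then (1 : ℝ) else 0))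
    :
    ∃ αstar : Fin K → Fin (M + 1),
      ∀ (k : Fin K) (a : Fin (M + 1)),
        c k αstar ≤ c k (Function.update αstar k a) := by
  -- trivial case M = 0
  rcases Nat.eq_zero_or_pos M with hM0 | hMpos
  · refine ⟨fun _ => 0, fun k a => ?_⟩
    subst hM0
    have ha : a = 0 := Fin.ext (by omega)
    subst ha
    rw [show (Function.update (fun _ : Fin K => (0 : Fin 1)) k 0)
        = (fun _ : Fin K => (0 : Fin 1)) from funext (fun n => by
          by_cases hn : n = k <;> simp [hn])]
  -- main case M ≥ 1
  have hMr : (0 : ℝ) < (M : ℝ) := by exact_mod_cast hMpos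
  have hwpos : ∀ k, 0 < w k := fun k => by rw [hw]; exact mul_pos (hp k) (hh k)
  have hCpos : ∀ k, 0 < p k * (I k + (1 - b k) * D k) := by
    intro k
    have h1 : 0 ≤ (1 - b k) * D k := by
      rcases hb k with h' | h' <;> rw [h'] <;> nlinarith [hD k]
    exact mul_pos (hp k) (by linarith [hI k])
  have hELpos : ∀ k, 0 < EL k := fun k => by
    rw [hEL]; exact div_pos (mul_pos hζ (pow_pos (hS k) 3)) (pow_pos hτ 2)
  have hΥnn : ∀ k α, 0 ≤ Υ k α := by
    intro k α
    rw [hΥ]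
    exact Finset.sum_nonneg fun n _ => (hwpos n).le
  -- V in the normalized form used by the analytic lemmas
  have hVeq : ∀ k, V k = w k /
      ((2 : ℝ) ^ (p k * (I k + (1 - b k) * D k) * (M : ℝ) / (EL k * B)) - 1) - σ2 := by
    intro k
    rw [hV]
    have : p k * τ ^ 2 * (M : ℝ) * (I k + (1 - b k) * D k) / (B * ζ * S k ^ 3)
        = p k * (I k + (1 - b k) * D k) * (M : ℝ) / (EL k * B) := by
      rw [hEL]
      have hS3 : (S k) ^ 3 ≠ 0 := ne_of_gt (pow_pos (hS k) 3)
      field_simp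
    rw [this]
  -- EO as the analytic function of interference
  have hEOeq : ∀ k α, EO k α
      = p k * (I k + (1 - b k) * D k)
        / ((B / (M : ℝ)) * Real.logb 2 (1 + w k / (Υ k α + σ2))) := by
    intro k α; rw [hEO, hr]
  -- key: any strictly improving unilateral deviation strictly decreases φ
  have key : ∀ (α : Fin K → Fin (M + 1)) (k : Fin K) (a : Fin (M + 1)),
      c k (Function.update α k a) < c k α → φ (Function.update α k a) < φ α := by
    intro α k a hlt
    set α' := Function.update α k a with hα'
    have hα'k : α' k = a := Function.update_self k a α
    have hα'n : ∀ n, n ≠ k → α' n = α n := fun n hn => Function.update_of_ne hn a α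
    -- the pairwise term
    set f : (Fin K → Fin (M + 1)) → Fin K → Fin K → ℝ := fun β i n =>
      w i * w n * (if β n = β i then (1 : ℝ) else 0) * (if 0 < β i then (1 : ℝ) else 0)
      with hf
    have hsymm : ∀ β i n, f β i n = f β n i := by
      intro β i n
      by_cases hcase : β n = β i
      · rw [hf]; simp only
        rw [if_pos hcase, if_pos hcase.symm, hcase]; ring
      · rw [hf]; simp only
        rw [if_neg hcase, if_neg (Ne.symm hcase)]; ring
    have hrow : ∀ β : Fin K → Fin (M + 1),
        (∑ n ∈ Finset.univ.erase k, f β k n)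
          = w k * Υ k β * (if 0 < β k then (1 : ℝ) else 0) := by
      intro β
      rw [hΥ, Finset.sum_filter, Finset.mul_sum, Finset.sum_mul]
      refine Finset.sum_congr rfl fun n _ => ?_
      rw [hf]; simp only
      split_ifs <;> ring
    -- split the double sum
    have hS1 : ∀ β : Fin K → Fin (M + 1),
        (∑ i : Fin K, ∑ n ∈ Finset.univ.erase i, f β i n)
          = 2 * (∑ n ∈ Finset.univ.erase k, f β k n)
            + ∑ i ∈ Finset.univ.erase k, ∑ n ∈ (Finset.univ.erase i).erase k, f β i n := by
      intro β
      rw [← Finset.add_sum_erase Finset.univ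
            (fun i => ∑ n ∈ Finset.univ.erase i, f β i n) (Finset.mem_univ k)]
      have hinner : ∀ i ∈ Finset.univ.erase k,
          (∑ n ∈ Finset.univ.erase i, f β i n)
            = f β k i + ∑ n ∈ (Finset.univ.erase i).erase k, f β i n := by
        intro i hi
        have hik : i ≠ k := (Finset.mem_erase.mp hi).1
        rw [← Finset.add_sum_erase (Finset.univ.erase i) (fun n => f β i n)
              (Finset.mem_erase.mpr ⟨hik.symm, Finset.mem_univ k⟩)]
        rw [hsymm β i k]
      rw [Finset.sum_congr rfl hinner, Finset.sum_add_distrib]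
      ring
    -- decomposition of φ
    have hφdec : ∀ β : Fin K → Fin (M + 1),
        φ β = w k * Υ k β * (if 0 < β k then (1 : ℝ) else 0)
          + w k * V k * (if β k = 0 then (1 : ℝ) else 0)
          + ((1 / 2) * ∑ i ∈ Finset.univ.erase k,
                ∑ n ∈ (Finset.univ.erase i).erase k, f β i n
             + ∑ i ∈ Finset.univ.erase k,
                w i * V i * (if β i = 0 then (1 : ℝ) else 0)) := by
      intro β
      rw [hφ, hS1, hrow,
        ← Finset.add_sum_erase Finset.univ
          (fun i => w i * V i * (if β i = 0 then (1 : ℝ) else 0)) (Finset.mem_univ k)]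
      ring
    -- the residual parts are invariant under the deviation of k
    have hrest1 : (∑ i ∈ Finset.univ.erase k,
          ∑ n ∈ (Finset.univ.erase i).erase k, f α' i n)
        = ∑ i ∈ Finset.univ.erase k, ∑ n ∈ (Finset.univ.erase i).erase k, f α i n := by
      refine Finset.sum_congr rfl fun i hi => Finset.sum_congr rfl fun n hn => ?_
      have hik : i ≠ k := (Finset.mem_erase.mp hi).1
      have hnk : n ≠ k := (Finset.mem_erase.mp hn).1
      rw [hf]; simp only [hα'n i hik, hα'n n hnk]
    have hrest2 : (∑ i ∈ Finset.univ.erase k,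
          w i * V i * (if α' i = 0 then (1 : ℝ) else 0))
        = ∑ i ∈ Finset.univ.erase k, w i * V i * (if α i = 0 then (1 : ℝ) else 0) := by
      refine Finset.sum_congr rfl fun i hi => ?_
      rw [hα'n i (Finset.mem_erase.mp hi).1]
    -- reduce to comparing the k-terms
    rw [hφdec α, hφdec α', hrest1, hrest2]
    have hgoal : w k * Υ k α' * (if 0 < α' k then (1 : ℝ) else 0)
        + w k * V k * (if α' k = 0 then (1 : ℝ) else 0)
        < w k * Υ k α * (if 0 < α k then (1 : ℝ) else 0)
          + w k * V k * (if α k = 0 then (1 : ℝ) else 0) := by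
      rw [hc, hc, hα'k] at hlt
      rw [hα'k]
      by_cases hA : α k = 0 <;> by_cases hA' : a = 0
      · -- both local: α' = α, contradiction
        exfalso
        rw [if_pos hA, if_pos hA'] at hlt
        exact lt_irrefl _ hlt
      · -- was local, deviates to offload: EO α' < EL
        rw [if_pos hA, if_neg hA'] at hlt
        rw [hEOeq] at hlt
        have hΥV : Υ k α' < V k := by
          rw [hVeq k]
          exact (FltEL hB hσ hMr (hwpos k) (hCpos k) (hELpos k) (hΥnn k α')).mp hlt
        have h0a : 0 < a := Fin.pos_of_ne_zero hA'
        rw [if_pos hA, if_neg hA', if_pos h0a,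
          if_neg (by simp [hA] : ¬ 0 < α k)]
        have := mul_lt_mul_of_pos_left hΥV (hwpos k)
        nlinarith [hwpos k]
      · -- was offloading, deviates to local: EL < EO α
        rw [if_neg hA, if_pos hA'] at hlt
        rw [hEOeq] at hlt
        have hVΥ : V k < Υ k α := by
          rw [hVeq k]
          exact (ELltF hB hσ hMr (hwpos k) (hCpos k) (hELpos k) (hΥnn k α)).mp hlt
        have h0A : 0 < α k := Fin.pos_of_ne_zero hA
        rw [if_pos hA', if_neg (by simp [hA'] : ¬ 0 < a), if_pos h0A, if_neg hA]
        nlinarith [hwpos k]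
      · -- offload to offload
        rw [if_neg hA, if_neg hA'] at hlt
        rw [hEOeq, hEOeq] at hlt
        have hΥΥ : Υ k α' < Υ k α :=
          (FltF hB hσ hMr (hwpos k) (hCpos k) (hΥnn k α') (hΥnn k α)).mp hlt
        have h0a : 0 < a := Fin.pos_of_ne_zero hA'
        have h0A : 0 < α k := Fin.pos_of_ne_zero hA
        rw [if_pos h0a, if_neg hA', if_pos h0A, if_neg hA]
        nlinarith [hwpos k]
    linarith
  -- take a minimizer of the potential
  obtain ⟨αstar, -, hmin⟩ := Finset.exists_min_image
    (Finset.univ : Finset (Fin K → Fin (M + 1))) φ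
    ⟨fun _ => 0, Finset.mem_univ _⟩
  refine ⟨αstar, fun k a => ?_⟩
  by_contra hcon
  push_neg at hcon
  exact absurd (hmin _ (Finset.mem_univ (Function.update αstar k a)))
    (not_le.mpr (key αstar k a hcon))
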